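/- Let G be a graph with an RDV representation. Then any vertex v that maximizes the depth y(t(v)) of the top node of its path is a simple vertex: its closed neighbourhood N[v] is a clique that can be ordered w_1,...,w_k with N[w_1] ⊆ N[w_2] ⊆ ... ⊆ N[w_k]. -/

import Mathlib

namespace Paper

/-- Has vertex `v` already been matched by the edge list `M`? -/
def matchedB {n : ℕ} (M : List (Fin n × Fin n)) (v : Fin n) : Bool :=
  M.any fun e => e.1 = v || e.2 = v

/-- One step of the greedy matching algorithm: process vertex `i`; if it is unmatched
and has an unmatched neighbour, match it to the unmatched neighbour of smallest index. -/
def greedyStep {n : ℕ} (G : SimpleGraph (Fin n)) [DecidableRel G.Adj]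
    (M : List (Fin n × Fin n)) (i : Fin n) : List (Fin n × Fin n) :=
  if matchedB M i then M
  else
    if h : (Finset.univ.filter fun j => G.Adj i j ∧ matchedB M j = false).Nonempty then
      (i, (Finset.univ.filter fun j => G.Adj i j ∧ matchedB M j = false).min' h) :: M
    else M

/-- The greedy matching algorithm, processing the vertices `v_1, …, v_n` in order. -/
def greedy {n : ℕ} (G : SimpleGraph (Fin n)) [DecidableRel G.Adj] : List (Fin n × Fin n) :=
  (List.finRange n).foldl (greedyStep G) []

/-- The partial matching produced by the greedy algorithm after processing the
first `k` vertices. -/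
def greedyPrefix {n : ℕ} (G : SimpleGraph (Fin n)) [DecidableRel G.Adj] (k : ℕ) :
    List (Fin n × Fin n) :=
  ((List.finRange n).take k).foldl (greedyStep G) []

/-- One step of the delayed greedy algorithm: state is (matching, free set `F`);
when processing `j`, if `j` has a neighbour in `F`, match `j` to the smallest-index
such neighbour and remove it from `F`; otherwise add `j` to `F`. -/
def delayedStep {n : ℕ} (G : SimpleGraph (Fin n)) [DecidableRel G.Adj]
    (s : List (Fin n × Fin n) × Finset (Fin n)) (j : Fin n) :
    List (Fin n × Fin n) × Finset (Fin n) :=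
  if h : (s.2.filter fun i => G.Adj i j).Nonempty then
    (((s.2.filter fun i => G.Adj i j).min' h, j) :: s.1,
      s.2.erase ((s.2.filter fun i => G.Adj i j).min' h))
  else (s.1, insert j s.2)

/-- The delayed greedy matching algorithm. -/
def delayedGreedy {n : ℕ} (G : SimpleGraph (Fin n)) [DecidableRel G.Adj] :
    List (Fin n × Fin n) :=
  ((List.finRange n).foldl (delayedStep G) ([], ∅)).1

/-- `M` is a matching of `G`: its members are edges of `G` and are pairwise
vertex-disjoint. -/
def IsMatchingL {n : ℕ} (G : SimpleGraph (Fin n)) (M : List (Fin n × Fin n)) : Prop :=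
  (∀ e ∈ M, G.Adj e.1 e.2) ∧
    ∀ e ∈ M, ∀ f ∈ M, e ≠ f → e.1 ≠ f.1 ∧ e.1 ≠ f.2 ∧ e.2 ≠ f.1 ∧ e.2 ≠ f.2

/-- A finite rooted tree on node set `Fin N`, given by a parent function and a
depth function (distance to the root). -/
structure RootedTree (N : ℕ) where
  parent : Fin N → Fin N
  root : Fin N
  depth : Fin N → ℕ
  depth_root : depth root = 0
  parent_root : parent root = root
  depth_parent : ∀ i, i ≠ root → depth (parent i) + 1 = depth i

/-- `T.Anc u w` : node `u` is an ancestor (possibly equal) of node `w`. -/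
def RootedTree.Anc {N : ℕ} (T : RootedTree N) (u w : Fin N) : Prop :=
  ∃ k : ℕ, T.parent^[k] w = u

/-- A node is a leaf if it has no children. -/
def RootedTree.IsLeaf {N : ℕ} (T : RootedTree N) (u : Fin N) : Prop :=
  ∀ w, T.parent w = u → w = u

/-- The data of an RDV representation: a rooted host tree `T` and, for each vertex `v`,
a downward path `P(v)` going from its top node `t v` down to its bottom node `b v`. -/
structure RDVData (N n : ℕ) where
  T : RootedTree N
  t : Fin n → Fin N
  b : Fin n → Fin N
  downward : ∀ v, T.Anc (t v) (b v)

/-- The node `u` lies on the downward path `P(v)`. -/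
def RDVData.onPath {N n : ℕ} (R : RDVData N n) (v : Fin n) (u : Fin N) : Prop :=
  R.T.Anc (R.t v) u ∧ R.T.Anc u (R.b v)

/-- `R` is an RDV representation of `G`: distinct vertices are adjacent iff their
downward paths share a node. -/
def RDVData.IsRep {N n : ℕ} (R : RDVData N n) (G : SimpleGraph (Fin n)) : Prop :=
  ∀ u w : Fin n, u ≠ w → (G.Adj u w ↔ ∃ node, R.onPath u node ∧ R.onPath w node)

/-- The identity enumeration `v_1, …, v_n` (i.e. the order on `Fin n`) is a bottom-up
enumeration: vertices are sorted by decreasing depth of the top node `t v`. -/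
def RDVData.BottomUp {N n : ℕ} (R : RDVData N n) : Prop :=
  ∀ i j : Fin n, i ≤ j → R.T.depth (R.t j) ≤ R.T.depth (R.t i)

/-- A planar (left-to-right) coordinate structure on a rooted tree: an injective
index on the leaves so that the leaf descendants of every node occupy a contiguous
range of indices, together with the leftmost leaf descendant `lmost` and rightmost
leaf descendant `rmost` of every node. -/
structure PlanarCoords {N : ℕ} (T : RootedTree N) where
  idx : Fin N → ℕ
  lmost : Fin N → Fin N
  rmost : Fin N → Fin N
  idx_inj : ∀ u w, T.IsLeaf u → T.IsLeaf w → idx u = idx w → u = w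
  lmost_leaf : ∀ u, T.IsLeaf (lmost u)
  lmost_desc : ∀ u, T.Anc u (lmost u)
  lmost_min : ∀ u lf, T.IsLeaf lf → T.Anc u lf → idx (lmost u) ≤ idx lf
  rmost_leaf : ∀ u, T.IsLeaf (rmost u)
  rmost_desc : ∀ u, T.Anc u (rmost u)
  rmost_max : ∀ u lf, T.IsLeaf lf → T.Anc u lf → idx lf ≤ idx (rmost u)
  contiguous : ∀ u lf lf' lf'', T.IsLeaf lf → T.IsLeaf lf' → T.IsLeaf lf'' →
    T.Anc u lf → T.Anc u lf' → idx lf ≤ idx lf'' → idx lf'' ≤ idx lf' → T.Anc u lf''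

/-- The x-coordinate of a node: the index of its leftmost leaf descendant. -/
def PlanarCoords.x {N : ℕ} {T : RootedTree N} (P : PlanarCoords T) (u : Fin N) : ℕ :=
  P.idx (P.lmost u)

/-- The closed neighbourhood `N[v]`. -/
def closedNbr {n : ℕ} (G : SimpleGraph (Fin n)) (v : Fin n) : Set (Fin n) :=
  insert v {w | G.Adj v w}

/-- `v` is a simple vertex: `N[v]` is a clique that can be ordered
`w_1, …, w_k` with `N[w_1] ⊆ N[w_2] ⊆ … ⊆ N[w_k]`. -/
def IsSimpleVx {n : ℕ} (G : SimpleGraph (Fin n)) (v : Fin n) : Prop :=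
  G.IsClique (closedNbr G v) ∧
    ∃ l : List (Fin n), (∀ w, w ∈ l ↔ w ∈ closedNbr G v) ∧
      l.Chain' fun a b => closedNbr G a ⊆ closedNbr G b

/-- The subgraph of `G` induced by the tail vertices `{v_i, …, v_n}`. -/
def tailGraph {n : ℕ} (G : SimpleGraph (Fin n)) (i : Fin n) : SimpleGraph (Fin n) where
  Adj a b := G.Adj a b ∧ i ≤ a ∧ i ≤ b
  symm := by constructor; intro a b h; exact ⟨h.1.symm, h.2.2, h.2.1⟩
  loopless := by constructor; intro a h; exact G.loopless.irrefl a h.1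

/-- `G` is chordal: every cycle of length at least 4 has a chord, i.e. an edge
between two (necessarily non-consecutive) vertices of the cycle that is not an
edge of the cycle. -/
def Chordal {V : Type*} (G : SimpleGraph V) : Prop :=
  ∀ (v : V) (c : G.Walk v v), c.IsCycle → 4 ≤ c.length →
    ∃ u w, u ∈ c.support ∧ w ∈ c.support ∧ G.Adj u w ∧ s(u, w) ∉ c.edges

/-- `S` is (the node set of) a subtree of the rooted tree `T`. -/
def IsSubtree {N : ℕ} (T : RootedTree N) (S : Set (Fin N)) : Prop :=
  S.Nonempty ∧ ∃ top ∈ S, (∀ u ∈ S, T.Anc top u) ∧ ∀ u ∈ S, u ≠ top → T.parent u ∈ S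

namespace RootedTree

variable {N : ℕ} (T : RootedTree N)

theorem anc_refl (u : Fin N) : T.Anc u u := ⟨0, rfl⟩

theorem anc_trans {a b c : Fin N} (h1 : T.Anc a b) (h2 : T.Anc b c) : T.Anc a c := by
  obtain ⟨k, hk⟩ := h1; obtain ⟨j, hj⟩ := h2
  exact ⟨k + j, by rw [Function.iterate_add_apply, hj, hk]⟩

theorem depth_parent_le (i : Fin N) : T.depth (T.parent i) ≤ T.depth i := by
  by_cases h : i = T.root
  · subst h; rw [T.parent_root]
  · have := T.depth_parent i h; omega

theorem depth_iterate_le (k : ℕ) (b : Fin N) :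
    T.depth (T.parent^[k] b) ≤ T.depth b := by
  induction k generalizing b with
  | zero => simp
  | succ k ih =>
    rw [Function.iterate_succ_apply]
    exact (ih (T.parent b)).trans (T.depth_parent_le b)

theorem depth_anc_le {a b : Fin N} (h : T.Anc a b) : T.depth a ≤ T.depth b := by
  obtain ⟨k, hk⟩ := h
  rw [← hk]; exact T.depth_iterate_le k b

theorem eq_of_anc_of_depth_le {a b : Fin N} (h : T.Anc a b)
    (hd : T.depth b ≤ T.depth a) : a = b := by
  obtain ⟨k, hk⟩ := h
  induction k generalizing b with
  | zero => exact hk.symm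
  | succ k ih =>
    rw [Function.iterate_succ_apply] at hk
    have h1 : T.depth a ≤ T.depth (T.parent^[k] (T.parent b)) := by
      rw [hk]
    have h2 : T.depth (T.parent^[k] (T.parent b)) ≤ T.depth (T.parent b) :=
      T.depth_iterate_le k (T.parent b)
    have h3 : T.depth (T.parent b) ≤ T.depth b := T.depth_parent_le b
    by_cases hb : b = T.root
    · have : T.parent b = b := by rw [hb, T.parent_root]
      rw [this] at hk
      exact ih (by omega) hk
    · have := T.depth_parent b hb; omega

theorem anc_comparable {a b c : Fin N} (hac : T.Anc a c) (hbc : T.Anc b c) :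
    T.Anc a b ∨ T.Anc b a := by
  obtain ⟨k, hk⟩ := hac; obtain ⟨j, hj⟩ := hbc
  rcases le_total j k with h | h
  · left
    refine ⟨k - j, ?_⟩
    rw [← hj, ← Function.iterate_add_apply, Nat.sub_add_cancel h, hk]
  · right
    refine ⟨j - k, ?_⟩
    rw [← hk, ← Function.iterate_add_apply, Nat.sub_add_cancel h, hj]

/-- Of two ancestors of a common node, the one of smaller depth is the higher one. -/
theorem anc_of_depth_le {a b c : Fin N} (hac : T.Anc a c) (hbc : T.Anc b c)
    (hd : T.depth a ≤ T.depth b) : T.Anc a b := by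
  rcases T.anc_comparable hac hbc with h | h
  · exact h
  · have := T.depth_anc_le h
    have : b = a := T.eq_of_anc_of_depth_le h (by omega)
    rw [this]; exact T.anc_refl a

end RootedTree

/-- In an RDV representation, any vertex maximizing the depth `y(t(v))`
is a simple vertex. -/
theorem stmt6 {N n : ℕ} (G : SimpleGraph (Fin n)) (R : RDVData N n)
    (hrep : R.IsRep G) (v : Fin n)
    (hmax : ∀ w, R.T.depth (R.t w) ≤ R.T.depth (R.t v)) :
    IsSimpleVx G v := by
  classical
  have hQv : R.onPath v (R.t v) := ⟨R.T.anc_refl _, R.downward v⟩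
  -- characterization: N[v] = vertices whose path contains t v
  have key : ∀ w, w ∈ closedNbr G v ↔ R.onPath w (R.t v) := by
    intro w
    constructor
    · intro hw
      rcases Set.mem_insert_iff.mp hw with rfl | hadj
      · exact hQv
      · have hne : v ≠ w := hadj.ne
        obtain ⟨u, huv, huw⟩ := (hrep v w hne).mp hadj
        refine ⟨R.T.anc_of_depth_le huw.1 huv.1 (hmax w), ?_⟩
        exact R.T.anc_trans huv.1 huw.2
    · intro hw
      by_cases hwv : w = v
      · rw [hwv]; exact Set.mem_insert v _
      · have hadj : G.Adj v w := (hrep v w (Ne.symm hwv)).mpr ⟨R.t v, hQv, hw⟩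
        exact Set.mem_insert_of_mem _ hadj
  -- clique
  have hclique : G.IsClique (closedNbr G v) := by
    intro a ha b hb hne
    exact (hrep a b hne).mpr ⟨R.t v, (key a).mp ha, (key b).mp hb⟩
  -- nestedness
  have hsub : ∀ w w', R.onPath w (R.t v) → R.onPath w' (R.t v) →
      R.T.depth (R.t w') ≤ R.T.depth (R.t w) →
      closedNbr G w ⊆ closedNbr G w' := by
    intro w w' hw hw' hd x hx
    by_cases hxw' : x = w'
    · rw [hxw']; exact Set.mem_insert _ _
    rcases Set.mem_insert_iff.mp hx with rfl | hadj
    · exact Set.mem_insert_of_mem _ ((hrep w' x (Ne.symm hxw')).mpr ⟨R.t v, hw', hw⟩)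
    · have hxw : w ≠ x := hadj.ne
      obtain ⟨u, huw, hux⟩ := (hrep w x hxw).mp hadj
      rcases R.T.anc_comparable huw.2 hw.2 with h1 | h2
      · -- Anc u (t v) : u lies above t v, and u ∈ P(w')
        have hw'u : R.onPath w' u := by
          refine ⟨?_, R.T.anc_trans h1 hw'.2⟩
          refine R.T.anc_of_depth_le hw'.1 h1 ?_
          exact hd.trans (R.T.depth_anc_le huw.1)
        exact Set.mem_insert_of_mem _ ((hrep w' x (Ne.symm hxw')).mpr ⟨u, hw'u, hux⟩)
      · -- Anc (t v) u : x's path contains t v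
        have hQx : R.onPath x (R.t v) := by
          refine ⟨R.T.anc_of_depth_le hux.1 h2 (hmax x), R.T.anc_trans h2 hux.2⟩
        exact Set.mem_insert_of_mem _ ((hrep w' x (Ne.symm hxw')).mpr ⟨R.t v, hw', hQx⟩)
  -- build the sorted list
  refine ⟨hclique, ?_⟩
  let r : Fin n → Fin n → Prop := fun a b => R.T.depth (R.t b) ≤ R.T.depth (R.t a)
  haveI : DecidableRel r := fun a b => Nat.decLe _ _
  haveI : IsTotal (Fin n) r := ⟨fun a b => le_total _ _⟩
  haveI : IsTrans (Fin n) r := ⟨fun a b c hab hbc => hbc.trans hab⟩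
  let s : Finset (Fin n) := Finset.univ.filter (fun w => w ∈ closedNbr G v)
  let l : List (Fin n) := List.insertionSort r s.toList
  have hmem : ∀ w, w ∈ l ↔ w ∈ closedNbr G v := by
    intro w
    rw [(List.perm_insertionSort r s.toList).mem_iff, Finset.mem_toList,
      Finset.mem_filter]
    simp
  have hsorted : l.Pairwise r := List.pairwise_insertionSort r s.toList
  refine ⟨l, hmem, ?_⟩
  have hpair : l.Pairwise fun a b => closedNbr G a ⊆ closedNbr G b := by
    refine List.Pairwise.imp_of_mem ?_ hsorted
    intro a b ha hb hab
    exact hsub a b ((key a).mp ((hmem a).mp ha)) ((key b).mp ((hmem b).mp hb)) hab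
  exact hpair.isChain
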